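/- Let C_α > 0 be given for every even exponent α ∈ Z_{≥0}^n with |α| = 2k, and let f be any polynomial whose support consists of exponents of degree 2k+1. Then there exists D > 0 such that Σ_{α even, |α|=2k} C_α x^α + f + D·Σ_{i=1}^n x_i^{(2k+2)e_i} is a sum of squares of polynomials, where x^{(2k+2)e_i} = x_i^{2k+2}. -/

import Mathlib

open MvPolynomial

private lemma sq_isSumSq {R : Type*} [AddMonoid R] [Mul R] (a : R) : IsSumSq (a * a) := by
  simpa using IsSumSq.sq_add a 0 IsSumSq.zero

private lemma isSumSq_finsetSum {ι R : Type*} [AddCommMonoid R] [Mul R] (s : Finset ι)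
    (f : ι → R) (h : ∀ i ∈ s, IsSumSq (f i)) : IsSumSq (∑ i ∈ s, f i) :=
  Finset.sum_induction f _ (fun _ _ => IsSumSq.add) IsSumSq.zero h

private lemma isSumSq_smul {n : ℕ} {p : MvPolynomial (Fin n) ℝ} {r : ℝ} (hr : 0 ≤ r)
    (hp : IsSumSq p) : IsSumSq (r • p) := by
  induction hp with
  | zero => simpa using IsSumSq.zero
  | @sq_add a S pS ih =>
    have : r • (a * a + S) = (Real.sqrt r • a) * (Real.sqrt r • a) + r • S := by
      rw [smul_mul_smul_comm, Real.mul_self_sqrt hr, smul_add]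
    rw [this]
    exact IsSumSq.sq_add _ ih

private lemma isSumSq_sum_even_pow {n d : ℕ} (s : Finset (Fin n)) :
    IsSumSq (∑ i ∈ s, (X i : MvPolynomial (Fin n) ℝ) ^ (2 * d)) := by
  have h : ∀ i ∈ s, (X i : MvPolynomial (Fin n) ℝ) ^ (2 * d) = X i ^ d * X i ^ d := by
    intro i _; rw [← pow_add, two_mul]
  rw [Finset.sum_congr rfl h]
  exact IsSumSq.sum_mul_self s _

private lemma sos_of_even {n : ℕ} (p : MvPolynomial (Fin n) ℝ)
    (h : ∀ τ ∈ p.support, 0 ≤ coeff τ p ∧ ∀ i, Even (τ i)) : IsSumSq p := by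
  rw [p.as_sum]
  refine isSumSq_finsetSum _ _ (fun τ hτ => ?_)
  obtain ⟨hc, hev⟩ := h τ hτ
  set h2 : Fin n →₀ ℕ := τ.mapRange (· / 2) (by simp) with hh2
  have hhalf : h2 + h2 = τ := by
    ext l
    obtain ⟨r, hr⟩ := hev l
    simp only [Finsupp.add_apply, hh2, Finsupp.mapRange_apply]
    omega
  have : monomial τ (coeff τ p)
      = monomial h2 (Real.sqrt (coeff τ p)) * monomial h2 (Real.sqrt (coeff τ p)) := by
    rw [monomial_mul, hhalf, Real.mul_self_sqrt hc]
  rw [this]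
  exact sq_isSumSq _

private lemma exists_part {n : ℕ} : ∀ (c : ℕ) (β : Fin n →₀ ℕ), c ≤ ∑ i, β i →
    ∃ u : Fin n →₀ ℕ, u ≤ β ∧ ∑ i, u i = c := by
  intro c
  induction c with
  | zero => exact fun β _ => ⟨0, zero_le, by simp⟩
  | succ c ihc =>
    intro β hc
    obtain ⟨u, hu, hsum⟩ := ihc β (le_trans (Nat.le_succ c) hc)
    rw [Finsupp.le_def] at hu
    have hj : ∃ j, u j < β j := by
      by_contra hcon
      push_neg at hcon
      have h1 : ∑ i, β i ≤ ∑ i, u i := Finset.sum_le_sum (fun i _ => hcon i)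
      omega
    obtain ⟨j, hj⟩ := hj
    refine ⟨u + Finsupp.single j 1, ?_, ?_⟩
    · rw [Finsupp.le_def]
      intro l
      simp only [Finsupp.add_apply, Finsupp.single_apply]
      by_cases hl : j = l
      · subst hl; simpa using hj
      · simp [hl, hu l]
    · simp only [Finsupp.add_apply, Finset.sum_add_distrib, hsum, Finsupp.single_apply]
      rw [Finset.sum_ite_eq Finset.univ j fun _ => 1]
      simp

private lemma domin_pure {n : ℕ} (d : ℕ) (i : Fin n) :
    IsSumSq ((1:ℝ) • (∑ j : Fin n, (X j : MvPolynomial (Fin n) ℝ) ^ (2 * d))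
      - monomial (Finsupp.single i d + Finsupp.single i d) 1) := by
  have h1 : monomial (Finsupp.single i d + Finsupp.single i d) (1:ℝ) = X i ^ (2 * d) := by
    rw [two_mul, ← Finsupp.single_add, X_pow_eq_monomial]
  have h2 : (∑ j : Fin n, (X j : MvPolynomial (Fin n) ℝ) ^ (2 * d)) - X i ^ (2 * d)
      = ∑ j ∈ Finset.univ.erase i, (X j : MvPolynomial (Fin n) ℝ) ^ (2 * d) := by
    rw [← Finset.add_sum_erase _ _ (Finset.mem_univ i)]
    ring
  rw [one_smul, h1, h2]
  exact isSumSq_sum_even_pow _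

private lemma domin {n : ℕ} (d : ℕ) (hn : 0 < n) :
    ∀ N : ℕ, ∀ γ : Fin n →₀ ℕ, γ.support.card ≤ N → (∑ i, γ i) = d →
    ∃ Cc : ℝ, 0 < Cc ∧ IsSumSq
      (Cc • (∑ i : Fin n, (X i : MvPolynomial (Fin n) ℝ) ^ (2 * d)) - monomial (γ + γ) 1) := by
  intro N
  induction N with
  | zero =>
    intro γ hcard hsum
    have hγ0 : γ = 0 :=
      Finsupp.support_eq_empty.mp (Finset.card_eq_zero.mp (Nat.le_zero.mp hcard))
    subst hγ0
    simp only [Finsupp.coe_zero, Pi.zero_apply, Finset.sum_const_zero] at hsum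
    have h0 : (0 : Fin n →₀ ℕ) = Finsupp.single ⟨0, hn⟩ d := by rw [← hsum]; simp
    rw [h0]
    exact ⟨1, one_pos, domin_pure d _⟩
  | succ N ihN =>
    intro γ hcard hsum
    by_cases hc1 : γ.support.card ≤ 1
    · rcases Nat.le_one_iff_eq_zero_or_eq_one.mp hc1 with h0 | h1
      · have hγ0 : γ = 0 := Finsupp.support_eq_empty.mp (Finset.card_eq_zero.mp h0)
        subst hγ0
        simp only [Finsupp.coe_zero, Pi.zero_apply, Finset.sum_const_zero] at hsum
        have h0 : (0 : Fin n →₀ ℕ) = Finsupp.single ⟨0, hn⟩ d := by rw [← hsum]; simp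
        rw [h0]
        exact ⟨1, one_pos, domin_pure d _⟩
      · obtain ⟨i, hi⟩ := Finset.card_eq_one.mp h1
        obtain ⟨-, hγ⟩ := Finsupp.support_eq_singleton.mp hi
        have hgid : γ i = d := by
          rw [hγ] at hsum
          simp only [Finsupp.single_apply, Finset.sum_ite_eq, Finset.mem_univ, if_true] at hsum
          exact hsum
        rw [hγ, hgid]
        exact ⟨1, one_pos, domin_pure d i⟩
    · -- main case: at least two elements in the support
      push_neg at hc1
      obtain ⟨i, hi, j, hj, hij⟩ := Finset.one_lt_card.mp hc1
      set P : MvPolynomial (Fin n) ℝ := ∑ i : Fin n, (X i : MvPolynomial (Fin n) ℝ) ^ (2 * d)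
        with hP
      have hPsos : IsSumSq P := isSumSq_sum_even_pow _
      set a := γ i with ha
      set b := γ j with hb
      set e := a + b with he
      set ρ : Fin n →₀ ℕ := Finsupp.erase j (Finsupp.erase i γ) with hρ
      set σ : ℕ → (Fin n →₀ ℕ) :=
        fun t => ρ + Finsupp.single i t + Finsupp.single j (e - t) with hσ
      have ha1 : 1 ≤ a := Nat.one_le_iff_ne_zero.mpr (Finsupp.mem_support_iff.mp hi)
      have hb1 : 1 ≤ b := Nat.one_le_iff_ne_zero.mpr (Finsupp.mem_support_iff.mp hj)
      have hσa : σ a = γ := by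
        ext l
        simp only [hσ, hρ, Finsupp.add_apply, Finsupp.single_apply, Finsupp.erase_apply]
        by_cases hli : i = l
        · subst hli
          simp [hij.symm, he, ha]
        · by_cases hlj : j = l
          · subst hlj
            simp [hij, he, Ne.symm hij, hb]
          · simp [Ne.symm hli, Ne.symm hlj, hli, hlj]
      -- sums of the states
      have hsums : ∀ t, (∑ l, σ t l) = (∑ l, ρ l) + (t + (e - t)) := by
        intro t
        simp only [hσ, Finsupp.add_apply, Finset.sum_add_distrib, Finsupp.single_apply,
          Finset.sum_ite_eq, Finset.mem_univ, if_true]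
        ring
      have hρsum : (∑ l, ρ l) + e = d := by
        have h := hsums a
        rw [hσa, hsum] at h
        omega
      have hσsum : ∀ t, t ≤ e → (∑ l, σ t l) = d := by
        intro t ht
        rw [hsums t]
        omega
      -- the monomials
      set M : ℕ → MvPolynomial (Fin n) ℝ := fun t => monomial (σ t + σ t) (1:ℝ) with hM
      -- the elementary move
      have hmove : ∀ t, t + 2 ≤ e →
          IsSumSq (((1:ℝ)/2) • M t + ((1:ℝ)/2) • M (t+2) - M (t+1)) := by
        intro t hte
        have hexp : σ t + σ (t+2) = σ (t+1) + σ (t+1) := by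
          ext l
          simp only [hσ, Finsupp.add_apply, Finsupp.single_apply]
          split_ifs <;> omega
        set u := monomial (σ t) (1:ℝ) with hu
        set v := monomial (σ (t+2)) (1:ℝ) with hv
        have h1 : u * u = M t := by simp [hu, hM, monomial_mul]
        have h2 : v * v = M (t+2) := by simp [hv, hM, monomial_mul]
        have h3 : u * v = M (t+1) := by simp [hu, hv, hM, monomial_mul, hexp]
        have hkey : ((1:ℝ)/2) • M t + ((1:ℝ)/2) • M (t+2) - M (t+1)
            = ((1:ℝ)/2) • ((u - v) * (u - v)) := by
          have hexpand : (u - v) * (u - v) = M t + M (t+2) - (M (t+1) + M (t+1)) := by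
            calc (u - v) * (u - v) = u * u + v * v - (u * v + u * v) := by ring
            _ = _ := by rw [h1, h2, h3]
          rw [hexpand]
          module
        rw [hkey]
        exact isSumSq_smul (by norm_num) (sq_isSumSq _)
      -- endpoints are in the scope of the induction hypothesis
      have hcard0 : (σ 0).support.card ≤ N := by
        have hsub : (σ 0).support ⊆ γ.support.erase i := by
          intro l hl
          rw [Finsupp.mem_support_iff] at hl
          rw [Finset.mem_erase, Finsupp.mem_support_iff]
          simp only [hσ, hρ, Finsupp.add_apply, Finsupp.single_apply, Finsupp.erase_apply] at hl
          by_cases hli : l = i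
          · exfalso
            subst hli
            simp [hij, Ne.symm hij] at hl
          · refine ⟨hli, ?_⟩
            by_cases hlj : l = j
            · subst hlj
              omega
            · simpa [Ne.symm hli, Ne.symm hlj, hli, hlj] using hl
        calc (σ 0).support.card ≤ (γ.support.erase i).card := Finset.card_le_card hsub
        _ = γ.support.card - 1 := Finset.card_erase_of_mem hi
        _ ≤ N := by omega
      have hcarde : (σ e).support.card ≤ N := by
        have hsub : (σ e).support ⊆ γ.support.erase j := by
          intro l hl
          rw [Finsupp.mem_support_iff] at hl
          rw [Finset.mem_erase, Finsupp.mem_support_iff]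
          simp only [hσ, hρ, Finsupp.add_apply, Finsupp.single_apply, Finsupp.erase_apply,
            Nat.sub_self] at hl
          by_cases hlj : l = j
          · exfalso
            subst hlj
            simp [hij, Ne.symm hij] at hl
          · refine ⟨hlj, ?_⟩
            by_cases hli : l = i
            · subst hli
              omega
            · simpa [Ne.symm hli, Ne.symm hlj, hli, hlj] using hl
        calc (σ e).support.card ≤ (γ.support.erase j).card := Finset.card_le_card hsub
        _ = γ.support.card - 1 := Finset.card_erase_of_mem hj
        _ ≤ N := by omega
      -- the upward induction: bounding a state by `P` plus a θ < 1 multiple of the next state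
      have hW : ∀ t, 1 ≤ t → t ≤ e - 1 →
          ∃ Cc θ : ℝ, 0 ≤ Cc ∧ 0 ≤ θ ∧ θ < 1 ∧ IsSumSq (Cc • P + θ • M (t+1) - M t) := by
        intro t ht1
        induction t, ht1 using Nat.le_induction with
        | base =>
          intro h1e
          obtain ⟨C0, hC0, hS0⟩ := ihN (σ 0) hcard0 (hσsum 0 (by omega))
          refine ⟨C0/2, 1/2, by positivity, by norm_num, by norm_num, ?_⟩
          have hMv := hmove 0 (by omega)
          have heq : (C0/2) • P + ((1:ℝ)/2) • M (1+1) - M 1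
              = ((1:ℝ)/2) • (C0 • P - M 0)
                + (((1:ℝ)/2) • M 0 + ((1:ℝ)/2) • M (0+2) - M (0+1)) := by
            norm_num
            module
          rw [heq]
          exact (isSumSq_smul (by norm_num) hS0).add hMv
        | succ t ht ih =>
          intro hte
          obtain ⟨C', θ', hC', hθ0, hθ1, hA⟩ := ih (by omega)
          have h2θ : (0:ℝ) < 2 - θ' := by linarith
          refine ⟨(2-θ')⁻¹ * C', (2-θ')⁻¹, by positivity, by positivity, ?_, ?_⟩
          · exact inv_lt_one_of_one_lt₀ (by linarith)
          · have hMv := hmove t (by omega)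
            have hidx : t + 1 + 1 = t + 2 := rfl
            rw [hidx]
            have heq : ((2-θ')⁻¹ * C') • P + (2-θ')⁻¹ • M (t+2) - M (t+1)
                = (2*(2-θ')⁻¹) • ( ((1:ℝ)/2) • (C' • P + θ' • M (t+1) - M t)
                    + (((1:ℝ)/2) • M t + ((1:ℝ)/2) • M (t+2) - M (t+1)) ) := by
              match_scalars <;> (try field_simp) <;> (try ring)
            rw [heq]
            exact isSumSq_smul (by positivity) ((isSumSq_smul (by norm_num) hA).add hMv)
      -- the downward induction from the right endpoint
      have hV : ∀ m, m ≤ e - 1 → ∃ Cc : ℝ, 0 < Cc ∧ IsSumSq (Cc • P - M (e - m)) := by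
        intro m
        induction m with
        | zero =>
          intro _
          obtain ⟨Ce, hCe, hSe⟩ := ihN (σ e) hcarde (hσsum e le_rfl)
          exact ⟨Ce, hCe, by simpa using hSe⟩
        | succ m ihm =>
          intro hme
          obtain ⟨C₁, hC₁, hS₁⟩ := ihm (by omega)
          obtain ⟨C₂, θ, hC₂, hθ0, hθ1, hS₂⟩ := hW (e - (m+1)) (by omega) (by omega)
          have hidx : e - (m+1) + 1 = e - m := by omega
          rw [hidx] at hS₂
          refine ⟨C₂ + θ * C₁ + 1, by positivity, ?_⟩
          have heq : (C₂ + θ * C₁ + 1) • P - M (e - (m+1))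
              = (C₂ • P + θ • M (e - m) - M (e - (m+1))) + θ • (C₁ • P - M (e - m)) + P := by
            module
          rw [heq]
          exact (hS₂.add (isSumSq_smul hθ0 hS₁)).add hPsos
      obtain ⟨Cc, hCc, hS⟩ := hV (e - a) (by omega)
      have hEA : e - (e - a) = a := by omega
      rw [hEA] at hS
      have hMa : M a = monomial (γ + γ) 1 := by
        simp only [hM]
        rw [hσa]
      rw [hMa] at hS
      exact ⟨Cc, hCc, hS⟩

/-- Let `g = Σ_{α even, |α| = 2k} C_α x^α` with all `C_α > 0`, and let `f` be a polynomial all of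
whose exponents have degree `2k+1`. Then there exists `D > 0` such that
`g + f + D·Σᵢ xᵢ^{2k+2}` is a sum of squares of polynomials. -/
theorem sos_of_even_part_dominates (n k : ℕ) (g f : MvPolynomial (Fin n) ℝ)
    (hgsupp : ∀ α : Fin n →₀ ℕ, α ∈ g.support ↔ ((∑ i, α i = 2 * k) ∧ ∀ i, Even (α i)))
    (hgpos : ∀ α ∈ g.support, 0 < coeff α g)
    (hfsupp : ∀ α ∈ f.support, ∑ i, α i = 2 * k + 1) :
    ∃ D : ℝ, 0 < D ∧
      IsSumSq (g + f + C D * ∑ i : Fin n, X i ^ (2 * k + 2)) := by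
  by_cases hS : f.support = ∅
  · have hf0 : f = 0 := support_eq_empty.mp hS
    refine ⟨1, one_pos, ?_⟩
    rw [hf0, map_one, one_mul, add_zero]
    refine IsSumSq.add (sos_of_even g ?_) ?_
    · intro τ hτ; exact ⟨(hgpos τ hτ).le, ((hgsupp τ).mp hτ).2⟩
    · simp only [show 2 * k + 2 = 2 * (k + 1) from by ring]
      exact isSumSq_sum_even_pow _
  · have hSne : f.support.Nonempty := Finset.nonempty_iff_ne_empty.mpr hS
    have hn : 0 < n := by
      rcases Nat.eq_zero_or_pos n with h0 | h
      · exfalso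
        obtain ⟨α, hα⟩ := hSne
        have hd := hfsupp α hα
        subst h0
        simp at hd
      · exact h
    have hgne : g.support.Nonempty := by
      refine ⟨Finsupp.single ⟨0, hn⟩ (2 * k), ?_⟩
      rw [hgsupp]
      constructor
      · simp [Finsupp.single_apply, Finset.sum_ite_eq]
      · intro l
        rw [Finsupp.single_apply]
        split_ifs
        · exact ⟨k, by ring⟩
        · exact Even.zero
    set m := g.support.inf' hgne (fun τ => coeff τ g) with hm
    have hmpos : 0 < m := (Finset.lt_inf'_iff _).mpr (fun τ hτ => hgpos τ hτ)
    have hcardpos : (0:ℝ) < (f.support.card : ℝ) := by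
      exact_mod_cast Finset.card_pos.mpr hSne
    set ε := m / (f.support.card : ℝ) with hε
    have hεpos : 0 < ε := div_pos hmpos hcardpos
    set sq2 := Real.sqrt ε with hsdef
    have hs2 : sq2 * sq2 = ε := Real.mul_self_sqrt hεpos.le
    have hsne : sq2 ≠ 0 := (Real.sqrt_pos.mpr hεpos).ne'
    -- choice of the decomposition α = u + w with |u| = k, |w| = k+1
    have hdec : ∀ α : Fin n →₀ ℕ, ∃ uw : (Fin n →₀ ℕ) × (Fin n →₀ ℕ),
        α ∈ f.support → (uw.1 + uw.2 = α ∧ (∑ i, uw.1 i) = k ∧ (∑ i, uw.2 i) = k + 1) := by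
      intro α
      by_cases hα : α ∈ f.support
      · obtain ⟨u, hu, hus⟩ := exists_part k α (by rw [hfsupp α hα]; omega)
        have hα2 : u + (α - u) = α := add_tsub_cancel_of_le hu
        refine ⟨(u, α - u), fun _ => ⟨hα2, hus, ?_⟩⟩
        have hsum2 : (∑ i, α i) = (∑ i, u i) + ∑ i, (α - u) i := by
          conv_lhs => rw [← hα2]
          simp [Finsupp.add_apply, Finset.sum_add_distrib]
        have hfα := hfsupp α hα
        show (∑ i, (α - u) i) = k + 1
        omega
      · exact ⟨(0, 0), fun h => absurd h hα⟩
    choose uw huw using hdec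
    set P2 : MvPolynomial (Fin n) ℝ := ∑ i : Fin n, X i ^ (2 * (k + 1)) with hP2
    have hP2sos : IsSumSq P2 := isSumSq_sum_even_pow _
    have hdom : ∀ α : Fin n →₀ ℕ, ∃ Cc : ℝ, 0 < Cc ∧ (α ∈ f.support →
        IsSumSq (Cc • P2 - monomial ((uw α).2 + (uw α).2) 1)) := by
      intro α
      by_cases hα : α ∈ f.support
      · obtain ⟨Cc, h1, h2⟩ :=
          domin (k + 1) hn ((uw α).2.support.card) (uw α).2 le_rfl ((huw α hα).2.2)
        exact ⟨Cc, h1, fun _ => h2⟩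
      · exact ⟨1, one_pos, fun h => absurd h hα⟩
    choose Cc hCcpos hCcsos using hdom
    set r : (Fin n →₀ ℕ) → ℝ := fun α => (coeff α f) ^ 2 / (4 * ε) with hr
    have hrnn : ∀ α, 0 ≤ r α := fun α => by positivity
    set D := 1 + ∑ α ∈ f.support, r α * Cc α with hD
    have hDpos : 0 < D := by
      have h1 : 0 ≤ ∑ α ∈ f.support, r α * Cc α :=
        Finset.sum_nonneg fun α _ => mul_nonneg (hrnn α) (hCcpos α).le
      rw [hD]; linarith
    refine ⟨D, hDpos, ?_⟩
    set T : MvPolynomial (Fin n) ℝ :=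
      ∑ α ∈ f.support, monomial ((uw α).1 + (uw α).1) ε with hT
    set W : MvPolynomial (Fin n) ℝ :=
      ∑ α ∈ f.support, monomial ((uw α).2 + (uw α).2) (r α) with hW
    set q : (Fin n →₀ ℕ) → MvPolynomial (Fin n) ℝ :=
      fun α => monomial ((uw α).1) sq2 + monomial ((uw α).2) (coeff α f / (2 * sq2)) with hq
    -- part 1 : g - T is a sum of squares
    have hTcoeff : ∀ τ, coeff τ T
        = ∑ α ∈ f.support, (if (uw α).1 + (uw α).1 = τ then ε else 0) := by
      intro τ
      rw [hT, coeff_sum]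
      exact Finset.sum_congr rfl fun α _ => coeff_monomial τ _ ε
    have hL : IsSumSq (g - T) := by
      apply sos_of_even
      intro τ hτ
      have hτg : τ ∈ g.support := by
        by_contra hng
        have h1 : coeff τ g = 0 := notMem_support_iff.mp hng
        have h2 : coeff τ T = 0 := by
          rw [hTcoeff]
          refine Finset.sum_eq_zero fun α hα => ?_
          rw [if_neg]
          intro hEq
          apply hng
          rw [hgsupp]
          obtain ⟨h3, h4, h5⟩ := huw α hα
          constructor
          · rw [← hEq]
            simp only [Finsupp.add_apply, Finset.sum_add_distrib, h4]
            omega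
          · intro l
            rw [← hEq]
            exact ⟨(uw α).1 l, by simp [Finsupp.add_apply]⟩
        have h3 : coeff τ (g - T) = 0 := by rw [coeff_sub, h1, h2]; ring
        exact (mem_support_iff.mp hτ) h3
      refine ⟨?_, ((hgsupp τ).mp hτg).2⟩
      rw [coeff_sub]
      have hTle : coeff τ T ≤ m := by
        rw [hTcoeff]
        calc ∑ α ∈ f.support, (if (uw α).1 + (uw α).1 = τ then ε else 0)
            ≤ ∑ _α ∈ f.support, ε := by
              refine Finset.sum_le_sum fun α _ => ?_
              split_ifs
              · exact le_rfl
              · exact hεpos.le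
        _ = (f.support.card : ℝ) * ε := by rw [Finset.sum_const, nsmul_eq_mul]
        _ = m := by rw [hε]; field_simp
      have hmle : m ≤ coeff τ g := Finset.inf'_le _ hτg
      linarith
    -- part 2 : the sum of completed squares
    have hQ : IsSumSq (∑ α ∈ f.support, q α * q α) :=
      isSumSq_finsetSum _ _ (fun α _ => sq_isSumSq _)
    -- part 3 : D • P2 - W is a sum of squares
    have hRm : IsSumSq (D • P2 - W) := by
      have heq : D • P2 - W
          = P2 + ∑ α ∈ f.support, (r α) • (Cc α • P2 - monomial ((uw α).2 + (uw α).2) 1) := by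
        rw [hD, hW]
        simp only [smul_sub, smul_smul, smul_monomial, smul_eq_mul, mul_one]
        rw [Finset.sum_sub_distrib, ← Finset.sum_smul, add_smul, one_smul]
        abel
      rw [heq]
      exact hP2sos.add (isSumSq_finsetSum _ _ fun α hα => isSumSq_smul (hrnn α) (hCcsos α hα))
    -- part 4 : expansion of the squares
    have hQeq : (∑ α ∈ f.support, q α * q α) = T + f + W := by
      have hterm : ∀ α ∈ f.support, q α * q α
          = monomial ((uw α).1 + (uw α).1) ε + monomial α (coeff α f)
            + monomial ((uw α).2 + (uw α).2) (r α) := by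
        intro α hα
        obtain ⟨h3, h4, h5⟩ := huw α hα
        have e1 : monomial ((uw α).1) sq2 * monomial ((uw α).1) sq2
            = monomial ((uw α).1 + (uw α).1) ε := by
          rw [monomial_mul, hs2]
        have e2 : monomial ((uw α).1) sq2 * monomial ((uw α).2) (coeff α f / (2 * sq2))
            = monomial α (coeff α f / 2) := by
          rw [monomial_mul, h3]
          congr 1
          field_simp
        have e3 : monomial ((uw α).2) (coeff α f / (2 * sq2))
              * monomial ((uw α).2) (coeff α f / (2 * sq2))
            = monomial ((uw α).2 + (uw α).2) (r α) := by
          rw [monomial_mul]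
          congr 1
          have h4s : (2 * sq2) * (2 * sq2) = 4 * ε := by rw [← hs2]; ring
          rw [div_mul_div_comm, h4s, hr]
          congr 1
          ring
        have e4 : monomial α (coeff α f / 2) + monomial α (coeff α f / 2)
            = monomial α (coeff α f) := by
          rw [← map_add]
          congr 1
          ring
        calc q α * q α
            = (monomial ((uw α).1) sq2 * monomial ((uw α).1) sq2)
              + ((monomial ((uw α).1) sq2 * monomial ((uw α).2) (coeff α f / (2 * sq2)))
                + (monomial ((uw α).1) sq2 * monomial ((uw α).2) (coeff α f / (2 * sq2))))
              + (monomial ((uw α).2) (coeff α f / (2 * sq2))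
                * monomial ((uw α).2) (coeff α f / (2 * sq2))) := by
              rw [hq]; ring
        _ = monomial ((uw α).1 + (uw α).1) ε + monomial α (coeff α f)
              + monomial ((uw α).2 + (uw α).2) (r α) := by
              rw [e1, e2, e3, e4]
      rw [Finset.sum_congr rfl hterm, Finset.sum_add_distrib, Finset.sum_add_distrib,
        support_sum_monomial_coeff f]
    -- final assembly
    have hP2' : (∑ i : Fin n, (X i : MvPolynomial (Fin n) ℝ) ^ (2 * k + 2)) = P2 := by
      rw [hP2]
      simp only [show 2 * k + 2 = 2 * (k + 1) from by ring]
    have hfinal : g + f + C D * (∑ i : Fin n, X i ^ (2 * k + 2))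
        = (g - T) + (∑ α ∈ f.support, q α * q α) + (D • P2 - W) := by
      rw [hQeq, hP2', ← smul_eq_C_mul]
      module
    rw [hfinal]
    exact (hL.add hQ).add hRm
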